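/- In the trading graph constructed by the reduction from 3D-matching, if the maximum 3D-matching of the source instance has size d, then every execution performs at most 7n + d exchanges. -/

import Mathlib

structure TState (N M : Type) where
  own : N → Finset M
  dem : N → Finset M

variable {N M : Type} [DecidableEq N] [DecidableEq M]

/-- In a trading cycle `c = [(i₁,j₁),…,(i_k,j_k)]`, agent `i_t` receives item `j_t`;
`gives c` pairs each agent with the item he gives, namely `j_{t-1}` (cyclically). -/
def gives (c : List (N × M)) : List (N × M) :=
  (c.map Prod.fst).zip ((c.rotate (c.length - 1)).map Prod.snd)

/-- A valid cycle step: nonempty, visits each agent and each item at most once,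
every participating agent receives an item he currently demands and gives an item
he currently owns. -/
def ValidCycle (s : TState N M) (c : List (N × M)) : Prop :=
  c ≠ [] ∧ (c.map Prod.fst).Nodup ∧ (c.map Prod.snd).Nodup ∧
    (∀ p ∈ c, p.2 ∈ s.dem p.1) ∧ (∀ p ∈ gives c, p.2 ∈ s.own p.1)

/-- The state after executing a cycle: every used demand edge is reversed into a
supply edge (the received item moves into the agent's supply and leaves his demand),
and every used supply edge is removed. -/
def stepCycle (s : TState N M) (c : List (N × M)) : TState N M where
  own i := ((s.own i).filter fun j => (i, j) ∉ gives c) ∪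
      ((c.filter fun p => decide (p.1 = i)).map Prod.snd).toFinset
  dem i := (s.dem i).filter fun j => (i, j) ∉ c

/-- An execution is a sequence of cycle steps, each valid in the successively
updated state. -/
def ValidExec (s : TState N M) : List (List (N × M)) → Prop
  | [] => True
  | c :: r => ValidCycle s c ∧ ValidExec (stepCycle s c) r

/-- Total number of exchanges (items received) in an execution. -/
def exchanges (r : List (List (N × M))) : ℕ := (r.map List.length).sum

/-- Number of items agent `i` receives during execution `r`. -/
def receivedCount (r : List (List (N × M))) (i : N) : ℕ :=
  (r.map fun c => c.countP fun p => decide (p.1 = i)).sum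

/-- Number of items agent `i` gives during execution `r`. -/
def givenCount (r : List (List (N × M))) (i : N) : ℕ :=
  (r.map fun c => (gives c).countP fun p => decide (p.1 = i)).sum

/-- A static execution allocates each item at most once. -/
def StaticExec (r : List (List (N × M))) : Prop := (r.flatten.map Prod.snd).Nodup

/-- Agents of the reduction from 3D-matching: `ga t 0, ga t 1, ga t 2` are the
gadget agents `(xyz)₂, (xyz)₄, (xyz)₆` for the triple `t = (x,y,z)`; `ya y = y₂`,
`za z = z₁`, `xa1 x = x₁`, `xa3 x = x₃`. -/
inductive RAg (n : ℕ) where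
  | ga : (Fin n × Fin n × Fin n) → Fin 3 → RAg n
  | ya : Fin n → RAg n
  | za : Fin n → RAg n
  | xa1 : Fin n → RAg n
  | xa3 : Fin n → RAg n
deriving DecidableEq

/-- Items of the reduction: `gi t 0, gi t 1, gi t 2, gi t 3` are the gadget items
`(xyz)₁, (xyz)₃, (xyz)₅, (xyz)₇`; `yi y = y₁`, `zi z = z₂`, `xi x = x₂`. -/
inductive RIt (n : ℕ) where
  | gi : (Fin n × Fin n × Fin n) → Fin 4 → RIt n
  | yi : Fin n → RIt n
  | zi : Fin n → RIt n
  | xi : Fin n → RIt n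
deriving DecidableEq

/-- Supply sets of the reduction instance built from the triple set `T`. -/
def RS (n : ℕ) (T : Finset (Fin n × Fin n × Fin n)) : RAg n → Finset (RIt n)
  | .ga t i => if t ∈ T then {.gi t i.castSucc} else ∅
  | .ya y => {.yi y}
  | .za z => (T.filter fun t => t.2.2 = z).image fun t => .gi t 3
  | .xa1 _ => Finset.univ.image RIt.zi
  | .xa3 x => {.xi x}

/-- Demand sets of the reduction instance built from the triple set `T`. -/
def RD (n : ℕ) (T : Finset (Fin n × Fin n × Fin n)) : RAg n → Finset (RIt n)
  | .ga t i =>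
      if t ∈ T then
        (if i = 0 then {.gi t 1, .gi t 3}
         else if i = 1 then {.yi t.2.1}
         else {.gi t 3})
      else ∅
  | .ya y => (T.filter fun t => t.2.1 = y).image fun t => .gi t 2
  | .za z => {.zi z}
  | .xa1 x => {.xi x}
  | .xa3 x => (T.filter fun t => t.1 = x).image fun t => .gi t 0

/-- Whether a demand edge (agent receives item) belongs to the class
`E₀ = {(x₁, x₂)}`. -/
def isE0 {n : ℕ} : RAg n × RIt n → Bool
  | (.xa1 x, .xi x') => x == x'
  | _ => false

/-- Whether a demand edge belongs to the class `E₆ = {((xyz)₂, (xyz)₇)}`. -/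
def isE6 {n : ℕ} : RAg n × RIt n → Bool
  | (.ga t i, .gi t' j) => t == t' && i == 0 && j == 3
  | _ => false

/-- The number of large `X`-cycles in an execution: cycle steps using an `E₀` edge
but no `E₆` edge. -/
def numLarge {n : ℕ} (r : List (List (RAg n × RIt n))) : ℕ :=
  r.countP fun c => (c.countP isE0 != 0) && (c.countP isE6 == 0)

/-- The number of `Y`-cycles in an execution: cycle steps using no `E₀` edge. -/
def numY {n : ℕ} (r : List (List (RAg n × RIt n))) : ℕ :=
  r.countP fun c => c.countP isE0 == 0

/-- A set of triples is a partial 3D-matching: pairwise disjoint in each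
coordinate. -/
def IsPartialMatching {n : ℕ} (S : Finset (Fin n × Fin n × Fin n)) : Prop :=
  ∀ t ∈ S, ∀ t' ∈ S, t ≠ t' →
    t.1 ≠ t'.1 ∧ t.2.1 ≠ t'.2.1 ∧ t.2.2 ≠ t'.2.2

section ListHelpers

variable {α β γ : Type*}

lemma countP_le_one_of_eq {l : List α} {P : α → Bool} (hnd : l.Nodup)
    (h : ∀ p ∈ l, ∀ q ∈ l, P p → P q → p = q) : l.countP P ≤ 1 := by
  rw [List.countP_eq_length_filter]
  rcases hf : l.filter P with _ | ⟨a, _ | ⟨b, m⟩⟩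
  · simp
  · simp
  · exfalso
    have hnd' := hnd.filter P
    rw [hf] at hnd'
    have ha : a ∈ l.filter P := by simp [hf]
    have hb : b ∈ l.filter P := by simp [hf]
    have : a = b := h a (List.mem_of_mem_filter ha) b (List.mem_of_mem_filter hb)
      (List.of_mem_filter ha) (List.of_mem_filter hb)
    subst this
    simp at hnd'

lemma length_le_sum_countP [Fintype β] [DecidableEq β] (l : List α) (Q : β → α → Bool)
    (h : ∀ p ∈ l, ∃ b, Q b p) : l.length ≤ ∑ b : β, l.countP (Q b) := by
  induction l with
  | nil => simp
  | cons a l ih =>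
    obtain ⟨b0, hb0⟩ := h a (by simp)
    have ih' := ih (fun p hp => h p (by simp [hp]))
    have : ∀ b, (a :: l).countP (Q b) = l.countP (Q b) + (if Q b a then 1 else 0) := by
      intro b
      by_cases hq : Q b a <;> simp [List.countP_cons, hq]
    simp only [this, Finset.sum_add_distrib, List.length_cons]
    have : 1 ≤ ∑ b : β, (if Q b a then 1 else 0) := by
      calc (1:ℕ) = if Q b0 a then 1 else 0 := by simp [hb0]
      _ ≤ _ := Finset.single_le_sum (f := fun b => if Q b a then (1:ℕ) else 0)
          (fun _ _ => by positivity) (Finset.mem_univ b0)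
    omega

lemma sum_le_countP (r : List γ) (f : γ → ℕ) (R : γ → Bool)
    (h1 : ∀ c ∈ r, f c ≤ 1) (h2 : ∀ c ∈ r, 0 < f c → R c) :
    (r.map f).sum ≤ r.countP R := by
  induction r with
  | nil => simp
  | cons c r ih =>
    have ih' := ih (fun x hx => h1 x (by simp [hx])) (fun x hx => h2 x (by simp [hx]))
    rw [List.map_cons, List.sum_cons, List.countP_cons]
    rcases Nat.eq_zero_or_pos (f c) with h | h
    · omega
    · have hr1 := h2 c (by simp) h
      have hr2 := h1 c (by simp)
      simp [hr1]
      omega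

lemma sum_map_sum [Fintype β] (r : List γ) (g : β → γ → ℕ) :
    (r.map fun c => ∑ b : β, g b c).sum = ∑ b : β, (r.map (g b)).sum := by
  induction r with
  | nil => simp
  | cons c r ih => rw [List.map_cons, List.sum_cons, ih, ← Finset.sum_add_distrib]; simp

lemma two_distinct_countP {r : List γ} {c₁ c₂ : γ} [DecidableEq γ] (χ : γ → Bool)
    (h1 : c₁ ∈ r) (h2 : c₂ ∈ r) (hne : c₁ ≠ c₂) (hχ1 : χ c₁) (hχ2 : χ c₂) :
    2 ≤ r.countP χ := by
  rw [List.countP_eq_length_filter]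
  have hs : ({c₁, c₂} : Finset γ) ⊆ (r.filter χ).toFinset := by
    intro x hx
    simp only [Finset.mem_insert, Finset.mem_singleton] at hx
    rcases hx with rfl | rfl <;> simp [List.mem_filter, h1, h2, hχ1, hχ2]
  calc 2 = ({c₁, c₂} : Finset γ).card := (Finset.card_pair hne).symm
  _ ≤ (r.filter χ).toFinset.card := Finset.card_le_card hs
  _ ≤ (r.filter χ).length := (r.filter χ).toFinset_card_le

end ListHelpers
section GivesLemmas

variable {N M : Type} [DecidableEq N] [DecidableEq M]

lemma gives_map_fst (c : List (N × M)) : (gives c).map Prod.fst = c.map Prod.fst := by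
  apply List.map_fst_zip
  simp

lemma gives_map_snd (c : List (N × M)) :
    (gives c).map Prod.snd = (c.rotate (c.length - 1)).map Prod.snd := by
  apply List.map_snd_zip
  simp

lemma gives_snd_perm (c : List (N × M)) :
    ((gives c).map Prod.snd).Perm (c.map Prod.snd) := by
  rw [gives_map_snd]; exact (c.rotate_perm _).map _

lemma mem_snd_gives {c : List (N × M)} {j : M} :
    j ∈ (gives c).map Prod.snd ↔ j ∈ c.map Prod.snd := (gives_snd_perm c).mem_iff

variable {s : TState N M} {c : List (N × M)}

lemma vc_nodup (hc : ValidCycle s c) : c.Nodup := hc.2.1.of_map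

lemma vc_gives_nodup_fst (hc : ValidCycle s c) : ((gives c).map Prod.fst).Nodup := by
  rw [gives_map_fst]; exact hc.2.1

lemma vc_gives_nodup_snd (hc : ValidCycle s c) : ((gives c).map Prod.snd).Nodup :=
  (gives_snd_perm c).nodup_iff.mpr hc.2.2.1

/-- two pairs of the cycle with the same agent are equal -/
lemma vc_fst_inj (hc : ValidCycle s c) {p q : N × M} (hp : p ∈ c) (hq : q ∈ c)
    (h : p.1 = q.1) : p = q :=
  List.inj_on_of_nodup_map hc.2.1 hp hq h

lemma vc_snd_inj (hc : ValidCycle s c) {p q : N × M} (hp : p ∈ c) (hq : q ∈ c)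
    (h : p.2 = q.2) : p = q :=
  List.inj_on_of_nodup_map hc.2.2.1 hp hq h

lemma vc_gives_fst_inj (hc : ValidCycle s c) {p q : N × M} (hp : p ∈ gives c)
    (hq : q ∈ gives c) (h : p.1 = q.1) : p = q :=
  List.inj_on_of_nodup_map (vc_gives_nodup_fst hc) hp hq h

lemma vc_gives_snd_inj (hc : ValidCycle s c) {p q : N × M} (hp : p ∈ gives c)
    (hq : q ∈ gives c) (h : p.2 = q.2) : p = q :=
  List.inj_on_of_nodup_map (vc_gives_nodup_snd hc) hp hq h

/-- every item received is given by someone -/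
lemma vc_giver_exists {j : M} (hj : j ∈ c.map Prod.snd) :
    ∃ g, (g, j) ∈ gives c := by
  have : j ∈ (gives c).map Prod.snd := mem_snd_gives.mpr hj
  obtain ⟨q, hq, hq2⟩ := List.mem_map.mp this
  exact ⟨q.1, by rwa [show (q.1, j) = q by rw [← hq2]]⟩

/-- every item given is received by someone -/
lemma vc_receiver_exists {j : M} (hj : j ∈ (gives c).map Prod.snd) :
    ∃ i, (i, j) ∈ c := by
  have : j ∈ c.map Prod.snd := mem_snd_gives.mp hj
  obtain ⟨q, hq, hq2⟩ := List.mem_map.mp this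
  exact ⟨q.1, by rwa [show (q.1, j) = q by rw [← hq2]]⟩

/-- every agent of the cycle gives something -/
lemma vc_gives_of_fst {i : N} (hi : i ∈ c.map Prod.fst) :
    ∃ j, (i, j) ∈ gives c := by
  have : i ∈ (gives c).map Prod.fst := by rw [gives_map_fst]; exact hi
  obtain ⟨q, hq, hq2⟩ := List.mem_map.mp this
  exact ⟨q.2, by rwa [show (i, q.2) = q by rw [← hq2]]⟩

/-- every agent of the cycle receives something -/
lemma vc_rec_of_fst {i : N} (hi : i ∈ (gives c).map Prod.fst) :
    ∃ j, (i, j) ∈ c := by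
  rw [gives_map_fst] at hi
  obtain ⟨q, hq, hq2⟩ := List.mem_map.mp hi
  exact ⟨q.2, by rwa [show (i, q.2) = q by rw [← hq2]]⟩

end GivesLemmas
section Reduction
set_option linter.unusedSectionVars false

variable {n : ℕ} {T : Finset (Fin n × Fin n × Fin n)}

lemma castSucc_ne3 (k : Fin 3) : Fin.castSucc k ≠ 3 := by fin_cases k <;> decide

lemma castSucc_eq0 {k : Fin 3} (h : Fin.castSucc k = 0) : k = 0 := by
  fin_cases k <;> first | rfl | exact absurd h (by decide)

lemma castSucc_eq1 {k : Fin 3} (h : Fin.castSucc k = 1) : k = 1 := by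
  fin_cases k <;> first | rfl | exact absurd h (by decide)

lemma castSucc_eq2 {k : Fin 3} (h : Fin.castSucc k = 2) : k = 2 := by
  fin_cases k <;> first | rfl | exact absurd h (by decide)

lemma rs_ga_mem {t' : Fin n × Fin n × Fin n} {k : Fin 3} {j}
    (h : j ∈ RS n T (RAg.ga t' k)) : t' ∈ T ∧ j = RIt.gi t' (Fin.castSucc k) := by
  simp only [RS] at h
  split_ifs at h with hT
  · exact ⟨hT, Finset.mem_singleton.mp h⟩
  · simp at h

/-! ### Characterization of demand membership by item shape -/

lemma rd_xi {i} {x : Fin n} (h : RIt.xi x ∈ RD n T i) : i = RAg.xa1 x := by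
  cases i with
  | ga t k => simp only [RD] at h; split_ifs at h <;> simp_all
  | ya y => simp [RD] at h
  | za z => simp [RD] at h
  | xa1 x' => simp [RD] at h; simp [h]
  | xa3 x' => simp [RD] at h

lemma rd_zi {i} {z : Fin n} (h : RIt.zi z ∈ RD n T i) : i = RAg.za z := by
  cases i with
  | ga t k => simp only [RD] at h; split_ifs at h <;> simp_all
  | ya y => simp [RD] at h
  | za z' => simp [RD] at h; simp [h]
  | xa1 x' => simp [RD] at h
  | xa3 x' => simp [RD] at h

lemma rd_yi {i} {y : Fin n} (h : RIt.yi y ∈ RD n T i) :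
    ∃ t, i = RAg.ga t 1 ∧ t.2.1 = y := by
  cases i with
  | ga t k => simp only [RD] at h; split_ifs at h <;> simp_all
  | ya y' => simp [RD] at h
  | za z' => simp [RD] at h
  | xa1 x' => simp [RD] at h
  | xa3 x' => simp [RD] at h

lemma rd_gi0 {i} {t : Fin n × Fin n × Fin n} (h : RIt.gi t 0 ∈ RD n T i) :
    i = RAg.xa3 t.1 := by
  cases i with
  | ga t' k => simp only [RD] at h; split_ifs at h <;> simp_all
  | ya y' => simp [RD] at h
  | za z' => simp [RD] at h
  | xa1 x' => simp [RD] at h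
  | xa3 x' => simp [RD] at h; simp [h.2]

lemma rd_gi1 {i} {t : Fin n × Fin n × Fin n} (h : RIt.gi t 1 ∈ RD n T i) :
    i = RAg.ga t 0 := by
  cases i with
  | ga t' k => simp only [RD] at h; split_ifs at h <;> simp_all
  | ya y' => simp [RD] at h
  | za z' => simp [RD] at h
  | xa1 x' => simp [RD] at h
  | xa3 x' => simp [RD] at h

lemma rd_gi2 {i} {t : Fin n × Fin n × Fin n} (h : RIt.gi t 2 ∈ RD n T i) :
    i = RAg.ya t.2.1 := by
  cases i with
  | ga t' k => simp only [RD] at h; split_ifs at h <;> simp_all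
  | ya y' => simp [RD] at h; simp [h.2]
  | za z' => simp [RD] at h
  | xa1 x' => simp [RD] at h
  | xa3 x' => simp [RD] at h

lemma rd_gi3 {i} {t : Fin n × Fin n × Fin n} (h : RIt.gi t 3 ∈ RD n T i) :
    i = RAg.ga t 0 ∨ i = RAg.ga t 2 := by
  cases i with
  | ga t' k =>
    simp only [RD] at h
    split_ifs at h <;> simp_all
    omega
  | ya y' => simp [RD] at h
  | za z' => simp [RD] at h
  | xa1 x' => simp [RD] at h
  | xa3 x' => simp [RD] at h

/-! ### Demand sets of specific agents -/

lemma rd_of_ga0 {j} {t : Fin n × Fin n × Fin n} (h : j ∈ RD n T (RAg.ga t 0)) :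
    j = RIt.gi t 1 ∨ j = RIt.gi t 3 := by
  simp only [RD] at h; split_ifs at h <;> simp_all

lemma rd_of_ga1 {j} {t : Fin n × Fin n × Fin n} (h : j ∈ RD n T (RAg.ga t 1)) :
    j = RIt.yi t.2.1 := by
  simp only [RD] at h; split_ifs at h <;> simp_all

lemma rd_of_ga2 {j} {t : Fin n × Fin n × Fin n} (h : j ∈ RD n T (RAg.ga t 2)) :
    j = RIt.gi t 3 := by
  simp only [RD] at h; split_ifs at h <;> simp_all

lemma rd_of_za {j} {z : Fin n} (h : j ∈ RD n T (RAg.za z)) : j = RIt.zi z := by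
  simp [RD] at h; exact h

lemma rd_of_xa1 {j} {x : Fin n} (h : j ∈ RD n T (RAg.xa1 x)) : j = RIt.xi x := by
  simp [RD] at h; exact h

lemma rd_of_ya {j} {y : Fin n} (h : j ∈ RD n T (RAg.ya y)) :
    ∃ u, j = RIt.gi u 2 ∧ u.2.1 = y := by
  simp only [RD, Finset.mem_image, Finset.mem_filter] at h
  obtain ⟨u, ⟨-, hy⟩, ht⟩ := h
  exact ⟨u, ht.symm, hy⟩

lemma rd_of_xa3 {j} {x : Fin n} (h : j ∈ RD n T (RAg.xa3 x)) :
    ∃ u, j = RIt.gi u 0 ∧ u.1 = x := by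
  simp only [RD, Finset.mem_image, Finset.mem_filter] at h
  obtain ⟨u, ⟨-, hy⟩, ht⟩ := h
  exact ⟨u, ht.symm, hy⟩

/-! ### Characterization of supply membership -/

lemma rs_yi {i} {y : Fin n} (h : RIt.yi y ∈ RS n T i) : i = RAg.ya y := by
  cases i with
  | ga t k => obtain ⟨-, h⟩ := rs_ga_mem h; simp at h
  | ya y' => simp [RS] at h; simp [h]
  | za z' => simp [RS] at h
  | xa1 x' => simp [RS] at h
  | xa3 x' => simp [RS] at h

lemma rs_xi {i} {x : Fin n} (h : RIt.xi x ∈ RS n T i) : i = RAg.xa3 x := by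
  cases i with
  | ga t k => obtain ⟨-, h⟩ := rs_ga_mem h; simp at h
  | ya y' => simp [RS] at h
  | za z' => simp [RS] at h
  | xa1 x' => simp [RS] at h
  | xa3 x' => simp [RS] at h; simp [h]

lemma rs_gi0 {i} {t : Fin n × Fin n × Fin n} (h : RIt.gi t 0 ∈ RS n T i) :
    i = RAg.ga t 0 := by
  cases i with
  | ga t' k =>
    obtain ⟨-, h⟩ := rs_ga_mem h
    rw [RIt.gi.injEq] at h
    obtain ⟨rfl, hk⟩ := h
    rw [castSucc_eq0 hk.symm]
  | ya y' => simp [RS] at h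
  | za z' => simp [RS] at h
  | xa1 x' => simp [RS] at h
  | xa3 x' => simp [RS] at h

lemma rs_gi1 {i} {t : Fin n × Fin n × Fin n} (h : RIt.gi t 1 ∈ RS n T i) :
    i = RAg.ga t 1 := by
  cases i with
  | ga t' k =>
    obtain ⟨-, h⟩ := rs_ga_mem h
    rw [RIt.gi.injEq] at h
    obtain ⟨rfl, hk⟩ := h
    rw [castSucc_eq1 hk.symm]
  | ya y' => simp [RS] at h
  | za z' => simp [RS] at h
  | xa1 x' => simp [RS] at h
  | xa3 x' => simp [RS] at h

lemma rs_gi2 {i} {t : Fin n × Fin n × Fin n} (h : RIt.gi t 2 ∈ RS n T i) :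
    i = RAg.ga t 2 := by
  cases i with
  | ga t' k =>
    obtain ⟨-, h⟩ := rs_ga_mem h
    rw [RIt.gi.injEq] at h
    obtain ⟨rfl, hk⟩ := h
    rw [castSucc_eq2 hk.symm]
  | ya y' => simp [RS] at h
  | za z' => simp [RS] at h
  | xa1 x' => simp [RS] at h
  | xa3 x' => simp [RS] at h

lemma rs_gi3 {i} {t : Fin n × Fin n × Fin n} (h : RIt.gi t 3 ∈ RS n T i) :
    i = RAg.za t.2.2 := by
  cases i with
  | ga t' k =>
    obtain ⟨-, h⟩ := rs_ga_mem h
    rw [RIt.gi.injEq] at h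
    exact absurd h.2.symm (castSucc_ne3 k)
  | ya y' => simp [RS] at h
  | za z' => simp [RS] at h; simp [h.2]
  | xa1 x' => simp [RS] at h
  | xa3 x' => simp [RS] at h

lemma rs_of_ya {j} {y : Fin n} (h : j ∈ RS n T (RAg.ya y)) : j = RIt.yi y := by
  simp [RS] at h; exact h

lemma rs_of_xa3 {j} {x : Fin n} (h : j ∈ RS n T (RAg.xa3 x)) : j = RIt.xi x := by
  simp [RS] at h; exact h

lemma rs_of_ga0 {j} {t : Fin n × Fin n × Fin n} (h : j ∈ RS n T (RAg.ga t 0)) :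
    j = RIt.gi t 0 := by
  obtain ⟨-, h⟩ := rs_ga_mem h
  simpa using h

lemma rs_of_ga2 {j} {t : Fin n × Fin n × Fin n} (h : j ∈ RS n T (RAg.ga t 2)) :
    j = RIt.gi t 2 := by
  obtain ⟨-, h⟩ := rs_ga_mem h
  rw [h]
  rfl

lemma ga0_T {j} {t : Fin n × Fin n × Fin n}
    (h : j ∈ RS n T (RAg.ga t 0) ∨ j ∈ RD n T (RAg.ga t 0)) : t ∈ T := by
  by_contra ht
  rcases h with h | h <;> simp only [RS, RD, if_neg ht] at h <;> simp at h

lemma rsrd_disj (i : RAg n) (j : RIt n) (hs : j ∈ RS n T i) (hd : j ∈ RD n T i) :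
    False := by
  cases i with
  | ga t k =>
    obtain ⟨-, rfl⟩ := rs_ga_mem hs
    fin_cases k
    · rcases rd_of_ga0 hd with h | h <;> rw [RIt.gi.injEq] at h <;>
        exact absurd h.2 (by decide)
    · exact absurd (rd_of_ga1 hd) (by simp)
    · have := rd_of_ga2 hd
      rw [RIt.gi.injEq] at this
      exact absurd this.2 (by decide)
  | ya y' => rw [rs_of_ya hs] at hd; simp [RD] at hd
  | za z' => rw [rd_of_za hd] at hs; simp [RS] at hs
  | xa1 x' => rw [rd_of_xa1 hd] at hs; simp [RS] at hs
  | xa3 x' => rw [rs_of_xa3 hs] at hd; simp [RD] at hd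

end Reduction
section Step
set_option linter.unusedSectionVars false
variable {N M : Type} [DecidableEq N] [DecidableEq M]

lemma mem_own_step {s : TState N M} {c : List (N × M)} {i : N} {j : M} :
    j ∈ (stepCycle s c).own i ↔ (j ∈ s.own i ∧ (i, j) ∉ gives c) ∨ (i, j) ∈ c := by
  simp only [stepCycle, Finset.mem_union, Finset.mem_filter, List.mem_toFinset,
    List.mem_map, List.mem_filter]
  constructor
  · rintro (⟨h1, h2⟩ | ⟨p, ⟨hp, hpi⟩, hpj⟩)
    · exact Or.inl ⟨h1, h2⟩
    · right
      have : p = (i, j) := by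
        obtain ⟨p1, p2⟩ := p
        simp only [decide_eq_true_eq] at hpi
        simp_all
      rwa [this] at hp
  · rintro (⟨h1, h2⟩ | h)
    · exact Or.inl ⟨h1, h2⟩
    · exact Or.inr ⟨(i, j), ⟨h, by simp⟩, rfl⟩

lemma mem_dem_step {s : TState N M} {c : List (N × M)} {i : N} {j : M} :
    j ∈ (stepCycle s c).dem i ↔ j ∈ s.dem i ∧ (i, j) ∉ c := by
  simp [stepCycle]

end Step

section Invariant
set_option linter.unusedSectionVars false
variable {n : ℕ} {T : Finset (Fin n × Fin n × Fin n)}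

def RInv (n : ℕ) (T : Finset (Fin n × Fin n × Fin n)) (s : TState (RAg n) (RIt n)) : Prop :=
  (∀ i, s.dem i ⊆ RD n T i) ∧ ∀ i, s.own i ⊆ RS n T i ∪ ((RD n T i) \ s.dem i)

lemma dem_RD {s} (hI : RInv n T s) {i j} (h : j ∈ s.dem i) : j ∈ RD n T i := hI.1 i h

lemma own_cases {s} (hI : RInv n T s) {i j} (h : j ∈ s.own i) :
    j ∈ RS n T i ∨ (j ∈ RD n T i ∧ j ∉ s.dem i) := by
  rcases Finset.mem_union.mp (hI.2 i h) with h' | h'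
  · exact Or.inl h'
  · exact Or.inr (Finset.mem_sdiff.mp h')

lemma own_not_dem {s} (hI : RInv n T s) {i j} (h : j ∈ s.own i) : j ∉ s.dem i := by
  intro hd
  rcases own_cases hI h with h' | h'
  · exact rsrd_disj i j h' (dem_RD hI hd)
  · exact h'.2 hd

lemma inv_init : RInv n T ⟨RS n T, RD n T⟩ :=
  ⟨fun i => le_refl _, fun i => Finset.subset_union_left⟩

lemma inv_step {s c} (hI : RInv n T s) (hc : ValidCycle s c) :
    RInv n T (stepCycle s c) := by
  constructor
  · intro i j hj
    exact dem_RD hI (mem_dem_step.mp hj).1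
  · intro i j hj
    rcases mem_own_step.mp hj with ⟨h1, -⟩ | h1
    · rcases own_cases hI h1 with h' | h'
      · exact Finset.mem_union_left _ h'
      · refine Finset.mem_union_right _ (Finset.mem_sdiff.mpr ⟨h'.1, fun hd => ?_⟩)
        exact h'.2 (mem_dem_step.mp hd).1
    · have hd : j ∈ s.dem i := hc.2.2.2.1 (i, j) h1
      refine Finset.mem_union_right _ (Finset.mem_sdiff.mpr ⟨dem_RD hI hd, fun hd' => ?_⟩)
      exact (mem_dem_step.mp hd').2 h1

/-- auxiliary: a demand edge can be consumed at most once -/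
lemma recOnce_aux {s} (r : List (List (RAg n × RIt n))) (hr : ValidExec s r)
    (e : RAg n × RIt n) :
    r.countP (fun c => decide (e ∈ c)) ≤ 1 ∧
      (e.2 ∉ s.dem e.1 → r.countP (fun c => decide (e ∈ c)) = 0) := by
  induction r generalizing s with
  | nil => simp
  | cons c r ih =>
    obtain ⟨hc, hr'⟩ := hr
    obtain ⟨ih1, ih2⟩ := ih hr'
    by_cases hm : e ∈ c
    · have hnext : e.2 ∉ (stepCycle s c).dem e.1 := by
        rw [mem_dem_step]
        rintro ⟨-, h2⟩
        exact h2 hm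
      constructor
      · rw [List.countP_cons_of_pos (p := fun c => decide (e ∈ c)) (by simpa using hm)]
        have := ih2 hnext
        omega
      · intro hd
        exact absurd (hc.2.2.2.1 e hm) hd
    · constructor
      · rw [List.countP_cons_of_neg (p := fun c => decide (e ∈ c)) (by simpa using hm)]
        omega
      · intro hd
        rw [List.countP_cons_of_neg (p := fun c => decide (e ∈ c)) (by simpa using hm)]
        have : e.2 ∉ (stepCycle s c).dem e.1 := by
          rw [mem_dem_step]
          rintro ⟨h1, -⟩
          exact hd h1
        have := ih2 this
        omega

lemma recOnce {s} {r : List (List (RAg n × RIt n))} (hr : ValidExec s r)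
    (e : RAg n × RIt n) : r.countP (fun c => decide (e ∈ c)) ≤ 1 :=
  (recOnce_aux r hr e).1

/-- auxiliary: a supply edge can be used at most once -/
lemma giveOnce_aux {s} (r : List (List (RAg n × RIt n))) (hI : RInv n T s)
    (hr : ValidExec s r) (e : RAg n × RIt n) :
    r.countP (fun c => decide (e ∈ gives c)) ≤ 1 ∧
      (e.2 ∉ s.own e.1 ∧ e.2 ∉ s.dem e.1 →
        r.countP (fun c => decide (e ∈ gives c)) = 0) := by
  induction r generalizing s with
  | nil => simp
  | cons c r ih =>
    obtain ⟨hc, hr'⟩ := hr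
    obtain ⟨ih1, ih2⟩ := ih (inv_step hI hc) hr'
    by_cases hm : e ∈ gives c
    · have hown : e.2 ∈ s.own e.1 := hc.2.2.2.2 e hm
      have hdem : e.2 ∉ s.dem e.1 := own_not_dem hI hown
      have hnext : e.2 ∉ (stepCycle s c).own e.1 ∧ e.2 ∉ (stepCycle s c).dem e.1 := by
        constructor
        · rw [mem_own_step]
          rintro (⟨-, h2⟩ | h1)
          · exact h2 hm
          · exact hdem (hc.2.2.2.1 e h1)
        · rw [mem_dem_step]
          rintro ⟨h1, -⟩
          exact hdem h1
      constructor
      · rw [List.countP_cons_of_pos (p := fun c => decide (e ∈ gives c)) (by simpa using hm)]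
        have := ih2 hnext
        omega
      · rintro ⟨ho, -⟩
        exact absurd hown ho
    · rw [List.countP_cons_of_neg (p := fun c => decide (e ∈ gives c)) (by simpa using hm)]
      refine ⟨by omega, ?_⟩
      rintro ⟨ho, hd⟩
      have : e.2 ∉ (stepCycle s c).own e.1 ∧ e.2 ∉ (stepCycle s c).dem e.1 := by
        constructor
        · rw [mem_own_step]
          rintro (⟨h1, -⟩ | h1)
          · exact ho h1
          · exact hd (hc.2.2.2.1 e h1)
        · rw [mem_dem_step]
          rintro ⟨h1, -⟩
          exact hd h1
      have := ih2 this
      omega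

lemma giveOnce {s} {r : List (List (RAg n × RIt n))} (hI : RInv n T s)
    (hr : ValidExec s r) (e : RAg n × RIt n) :
    r.countP (fun c => decide (e ∈ gives c)) ≤ 1 :=
  (giveOnce_aux r hI hr e).1

/-- every cycle of a valid execution is valid in some invariant state -/
lemma exec_mem {s} {r : List (List (RAg n × RIt n))} (hI : RInv n T s)
    (hr : ValidExec s r) : ∀ c ∈ r, ∃ s', RInv n T s' ∧ ValidCycle s' c := by
  induction r generalizing s with
  | nil => simp
  | cons c r ih =>
    obtain ⟨hc, hr'⟩ := hr
    intro c' hc'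
    rcases List.mem_cons.mp hc' with rfl | hmem
    · exact ⟨s, hI, hc⟩
    · exact ih (inv_step hI hc) hr' c' hmem

/-- if an item which the agent does not initially own is ever given away by him,
it must have been received earlier -/
lemma trace {s} {r : List (List (RAg n × RIt n))} (hI : RInv n T s)
    (hr : ValidExec s r) (e : RAg n × RIt n) (h0 : e.2 ∉ s.own e.1)
    (hW : ∃ c ∈ r, e ∈ gives c) : ∃ c ∈ r, e ∈ c := by
  induction r generalizing s with
  | nil => simp at hW
  | cons c r ih =>
    obtain ⟨hc, hr'⟩ := hr
    by_cases hm : e ∈ c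
    · exact ⟨c, by simp, hm⟩
    · have h0' : e.2 ∉ (stepCycle s c).own e.1 := by
        rw [mem_own_step]
        rintro (⟨h1, -⟩ | h1)
        · exact h0 h1
        · exact hm h1
      obtain ⟨c', hc', hce⟩ := hW
      rcases List.mem_cons.mp hc' with rfl | hmem
      · exact absurd (hc.2.2.2.2 e hce) h0
      · obtain ⟨c'', h1, h2⟩ := ih (inv_step hI hc) hr' h0' ⟨c', hmem, hce⟩
        exact ⟨c'', by simp [h1], h2⟩

end Invariant
section Structural
set_option linter.unusedSectionVars false
variable {n : ℕ} {T : Finset (Fin n × Fin n × Fin n)}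
variable {s : TState (RAg n) (RIt n)} {c : List (RAg n × RIt n)}

lemma agent_rec (hc : ValidCycle s c) {i} (h : i ∈ c.map Prod.fst) :
    ∃ j, (i, j) ∈ c ∧ j ∈ s.dem i := by
  obtain ⟨p, hp, hpi⟩ := List.mem_map.mp h
  refine ⟨p.2, ?_, ?_⟩
  · rwa [show (i, p.2) = p by rw [← hpi]]
  · have := hc.2.2.2.1 p hp
    rwa [hpi] at this

lemma St_za (hI : RInv n T s) (hc : ValidCycle s c) {z}
    (h : RAg.za z ∈ c.map Prod.fst) : (RAg.za z, RIt.zi z) ∈ c := by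
  obtain ⟨j, hj, hd⟩ := agent_rec hc h
  rwa [rd_of_za (dem_RD hI hd)] at hj

lemma St_ya (hI : RInv n T s) (hc : ValidCycle s c) {y}
    (h : RAg.ya y ∈ c.map Prod.fst) : (RAg.ya y, RIt.yi y) ∈ gives c := by
  obtain ⟨j, hg⟩ := vc_gives_of_fst h
  have hown : j ∈ s.own (RAg.ya y) := hc.2.2.2.2 _ hg
  rcases own_cases hI hown with h' | ⟨h', hnd⟩
  · rwa [← rs_of_ya h']
  · obtain ⟨u, rfl, hu⟩ := rd_of_ya h'
    exfalso
    have : RIt.gi u 2 ∈ (gives c).map Prod.snd := List.mem_map_of_mem (f := Prod.snd) hg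
    obtain ⟨i', hi'⟩ := vc_receiver_exists this
    have hd' := hc.2.2.2.1 _ hi'
    have := rd_gi2 (dem_RD hI hd')
    simp only at this
    rw [this, hu] at hd'
    exact hnd hd'

lemma St_xa3 (hI : RInv n T s) (hc : ValidCycle s c) {x}
    (h : RAg.xa3 x ∈ c.map Prod.fst) : (RAg.xa3 x, RIt.xi x) ∈ gives c := by
  obtain ⟨j, hg⟩ := vc_gives_of_fst h
  have hown : j ∈ s.own (RAg.xa3 x) := hc.2.2.2.2 _ hg
  rcases own_cases hI hown with h' | ⟨h', hnd⟩
  · rwa [← rs_of_xa3 h']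
  · obtain ⟨u, rfl, hu⟩ := rd_of_xa3 h'
    exfalso
    have : RIt.gi u 0 ∈ (gives c).map Prod.snd := List.mem_map_of_mem (f := Prod.snd) hg
    obtain ⟨i', hi'⟩ := vc_receiver_exists this
    have hd' := hc.2.2.2.1 _ hi'
    have := rd_gi0 (dem_RD hI hd')
    simp only at this
    rw [this, hu] at hd'
    exact hnd hd'

lemma St_yirec (hI : RInv n T s) (hc : ValidCycle s c) {y}
    (h : RIt.yi y ∈ c.map Prod.snd) : (RAg.ya y, RIt.yi y) ∈ gives c := by
  obtain ⟨g, hg⟩ := vc_giver_exists h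
  have hown : RIt.yi y ∈ s.own g := hc.2.2.2.2 _ hg
  rcases own_cases hI hown with h' | ⟨h', hnd⟩
  · rwa [rs_yi h'] at hg
  · obtain ⟨u, rfl, hu⟩ := rd_yi h'
    exfalso
    have hgf : RAg.ga u 1 ∈ c.map Prod.fst := by
      rw [← gives_map_fst]
      exact List.mem_map_of_mem (f := Prod.fst) hg
    obtain ⟨jr, hjr, hjrd⟩ := agent_rec hc hgf
    rw [rd_of_ga1 (dem_RD hI hjrd), hu] at hjrd
    exact hnd hjrd

lemma St_gi1 (hI : RInv n T s) (hc : ValidCycle s c) {i t}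
    (h : (i, RIt.gi t 1) ∈ c) :
    i = RAg.ga t 0 ∧ (RAg.ga t 1, RIt.yi t.2.1) ∈ c := by
  have hd := hc.2.2.2.1 _ h
  have hi := rd_gi1 (dem_RD hI hd)
  simp only at hi
  refine ⟨hi, ?_⟩
  have hsnd : RIt.gi t 1 ∈ c.map Prod.snd := List.mem_map_of_mem (f := Prod.snd) h
  obtain ⟨g, hg⟩ := vc_giver_exists hsnd
  have hown : RIt.gi t 1 ∈ s.own g := hc.2.2.2.2 _ hg
  rcases own_cases hI hown with h' | ⟨h', hnd⟩
  · have hg1 : g = RAg.ga t 1 := rs_gi1 h'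
    subst hg1
    have hgf : RAg.ga t 1 ∈ c.map Prod.fst := by
      rw [← gives_map_fst]
      exact List.mem_map_of_mem (f := Prod.fst) hg
    obtain ⟨jr, hjr, hjrd⟩ := agent_rec hc hgf
    rwa [rd_of_ga1 (dem_RD hI hjrd)] at hjr
  · exfalso
    have := rd_gi1 (dem_RD hI (show RIt.gi t 1 ∈ s.dem i from hd))
    have hg0 : g = RAg.ga t 0 := rd_gi1 h'
    rw [hg0] at hnd
    rw [hi] at hd
    exact hnd hd

lemma St_gi3_giver (hI : RInv n T s) (hc : ValidCycle s c) {g t}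
    (hg : (g, RIt.gi t 3) ∈ gives c) : g = RAg.za t.2.2 ∨ g = RAg.ga t 0 := by
  have hown : RIt.gi t 3 ∈ s.own g := hc.2.2.2.2 _ hg
  rcases own_cases hI hown with h' | ⟨h', hnd⟩
  · exact Or.inl (rs_gi3 h')
  · rcases rd_gi3 h' with hg0 | hg2
    · exact Or.inr hg0
    · exfalso
      subst hg2
      have hgf : RAg.ga t 2 ∈ c.map Prod.fst := by
        rw [← gives_map_fst]
        exact List.mem_map_of_mem (f := Prod.fst) hg
      obtain ⟨jr, hjr, hjrd⟩ := agent_rec hc hgf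
      rw [rd_of_ga2 (dem_RD hI hjrd)] at hjrd
      exact hnd hjrd

lemma St_E6 (hI : RInv n T s) (hc : ValidCycle s c) {t}
    (h : (RAg.ga t 0, RIt.gi t 3) ∈ c) :
    (RAg.za t.2.2, RIt.gi t 3) ∈ gives c ∧ (RAg.za t.2.2, RIt.zi t.2.2) ∈ c ∧
      (RAg.xa3 t.1, RIt.gi t 0) ∈ c ∧ (RAg.xa3 t.1, RIt.xi t.1) ∈ gives c := by
  have hdem : RIt.gi t 3 ∈ s.dem (RAg.ga t 0) := hc.2.2.2.1 _ h
  -- the giver of (gi t 3) must be the z-agent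
  have hsnd : RIt.gi t 3 ∈ c.map Prod.snd := List.mem_map_of_mem (f := Prod.snd) h
  obtain ⟨g, hg⟩ := vc_giver_exists hsnd
  have hgza : g = RAg.za t.2.2 := by
    rcases St_gi3_giver hI hc hg with h' | h'
    · exact h'
    · exfalso
      subst h'
      exact own_not_dem hI (hc.2.2.2.2 _ hg) hdem
  subst hgza
  have hza : (RAg.za t.2.2, RIt.zi t.2.2) ∈ c := by
    apply St_za hI hc
    rw [← gives_map_fst]
    exact List.mem_map_of_mem (f := Prod.fst) hg
  -- the ga-t-0 agent gives (gi t 0) to the x-agent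
  have hgf : RAg.ga t 0 ∈ c.map Prod.fst := List.mem_map_of_mem (f := Prod.fst) h
  obtain ⟨gv, hgv⟩ := vc_gives_of_fst hgf
  have hown : gv ∈ s.own (RAg.ga t 0) := hc.2.2.2.2 _ hgv
  have hgv0 : gv = RIt.gi t 0 := by
    rcases own_cases hI hown with h' | ⟨h', hnd⟩
    · exact rs_of_ga0 h'
    · exfalso
      rcases rd_of_ga0 h' with rfl | rfl
      · have : RIt.gi t 1 ∈ c.map Prod.snd :=
          mem_snd_gives.mp (List.mem_map_of_mem (f := Prod.snd) hgv)
        obtain ⟨i', hi'⟩ := vc_receiver_exists (List.mem_map_of_mem (f := Prod.snd) hgv)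
        have hd' := hc.2.2.2.1 _ hi'
        have := rd_gi1 (dem_RD hI hd')
        simp only at this
        rw [this] at hd'
        exact hnd hd'
      · exact hnd hdem
  subst hgv0
  obtain ⟨i', hi'⟩ := vc_receiver_exists (List.mem_map_of_mem (f := Prod.snd) hgv)
  have hd' := hc.2.2.2.1 _ hi'
  have hix : i' = RAg.xa3 t.1 := rd_gi0 (dem_RD hI hd')
  subst hix
  exact ⟨hg, hza, hi', St_xa3 hI hc (List.mem_map_of_mem (f := Prod.fst) hi')⟩

lemma St_W (hI : RInv n T s) (hc : ValidCycle s c) {t}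
    (h : (RAg.ga t 0, RIt.gi t 3) ∈ gives c) :
    (RAg.ga t 2, RIt.gi t 3) ∈ c ∧ (RAg.ya t.2.1, RIt.gi t 2) ∈ c ∧
      (RAg.ya t.2.1, RIt.yi t.2.1) ∈ gives c ∧ t ∈ T := by
  have hown : RIt.gi t 3 ∈ s.own (RAg.ga t 0) := hc.2.2.2.2 _ h
  have hT : t ∈ T := by
    rcases own_cases hI hown with h' | ⟨h', -⟩
    · exact ga0_T (Or.inl h')
    · exact ga0_T (Or.inr h')
  obtain ⟨i', hi'⟩ := vc_receiver_exists (List.mem_map_of_mem (f := Prod.snd) h)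
  have hd' := hc.2.2.2.1 _ hi'
  have hrec2 : i' = RAg.ga t 2 := by
    rcases rd_gi3 (dem_RD hI hd') with h0 | h2
    · exfalso
      rw [h0] at hd'
      exact own_not_dem hI hown hd'
    · exact h2
  subst hrec2
  refine ⟨hi', ?_⟩
  -- ga t 2 gives gi t 2
  have hgf : RAg.ga t 2 ∈ c.map Prod.fst := List.mem_map_of_mem (f := Prod.fst) hi'
  obtain ⟨gv, hgv⟩ := vc_gives_of_fst hgf
  have hown2 : gv ∈ s.own (RAg.ga t 2) := hc.2.2.2.2 _ hgv
  have hgv2 : gv = RIt.gi t 2 := by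
    rcases own_cases hI hown2 with h' | ⟨h', hnd⟩
    · exact rs_of_ga2 h'
    · exfalso
      rw [rd_of_ga2 h'] at hnd
      exact hnd hd'
  subst hgv2
  obtain ⟨i'', hi''⟩ := vc_receiver_exists (List.mem_map_of_mem (f := Prod.snd) hgv)
  have hd'' := hc.2.2.2.1 _ hi''
  have : i'' = RAg.ya t.2.1 := rd_gi2 (dem_RD hI hd'')
  subst this
  exact ⟨hi'', St_ya hI hc (List.mem_map_of_mem (f := Prod.fst) hi''), hT⟩

end Structural
section Pattern
set_option linter.unusedSectionVars false

lemma patternA {γ β : Type*} [Fintype β] [DecidableEq β] (r : List (List γ))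
    (Q : β → List γ → γ → Bool) (R : β → List γ → Bool)
    (h1 : ∀ c ∈ r, ∀ p ∈ c, ∃ b, Q b c p)
    (h2 : ∀ b, ∀ c ∈ r, c.countP (Q b c) ≤ 1)
    (h3 : ∀ b, ∀ c ∈ r, 0 < c.countP (Q b c) → R b c) :
    (r.map List.length).sum ≤ ∑ b : β, r.countP (R b) := by
  calc (r.map List.length).sum
      ≤ (r.map fun c => ∑ b : β, c.countP (Q b c)).sum := by
        apply List.sum_le_sum
        intro c hc
        exact length_le_sum_countP c (fun b => Q b c) (h1 c hc)
    _ = ∑ b : β, (r.map fun c => c.countP (Q b c)).sum :=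
        sum_map_sum r (fun b c => c.countP (Q b c))
    _ ≤ ∑ b : β, r.countP (R b) :=
        Finset.sum_le_sum fun b _ => sum_le_countP r _ (R b) (h2 b) (h3 b)

variable {n : ℕ}

/-- classification targets -/
def Rb {n : ℕ} (b : (Fin 7 × Fin n) ⊕ (Fin n × Fin n × Fin n))
    (c : List (RAg n × RIt n)) : Bool :=
  match b with
  | .inl (k, v) =>
    if k = 0 then decide ((RAg.xa1 v, RIt.xi v) ∈ c)
    else if k = 1 then decide ((RAg.za v, RIt.zi v) ∈ c)
    else if k = 3 then decide ((RAg.xa3 v, RIt.xi v) ∈ gives c)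
    else if k = 6 then decide ((RAg.za v, RIt.zi v) ∈ c)
    else decide ((RAg.ya v, RIt.yi v) ∈ gives c)
  | .inr t => decide ((RAg.ga t 0, RIt.gi t 3) ∈ gives c)

/-- classification of received items -/
def Qb {n : ℕ} (b : (Fin 7 × Fin n) ⊕ (Fin n × Fin n × Fin n))
    (c : List (RAg n × RIt n)) (p : RAg n × RIt n) : Bool :=
  match b with
  | .inl (k, v) =>
    if k = 0 then decide (p = (RAg.xa1 v, RIt.xi v))
    else if k = 1 then decide (p = (RAg.za v, RIt.zi v))
    else if k = 2 then decide (p.2 = RIt.yi v)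
    else if k = 3 then decide (p.1 = RAg.xa3 v)
    else if k = 4 then
      decide (∃ t : Fin n × Fin n × Fin n, t.2.1 = v ∧ p = (RAg.ga t 0, RIt.gi t 1))
    else if k = 5 then decide (p.1 = RAg.ya v)
    else decide (∃ t : Fin n × Fin n × Fin n,
        t.2.2 = v ∧ p.2 = RIt.gi t 3 ∧ (RAg.za v, RIt.gi t 3) ∈ gives c)
  | .inr t => decide (p = (RAg.ga t 2, RIt.gi t 3) ∧ (RAg.ga t 0, RIt.gi t 3) ∈ gives c)

end Pattern
section Main
set_option linter.unusedSectionVars false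
set_option maxHeartbeats 1000000
variable {n : ℕ} {T : Finset (Fin n × Fin n × Fin n)}
variable {s : TState (RAg n) (RIt n)} {c : List (RAg n × RIt n)}

lemma fin4_cases (m : Fin 4) : m = 0 ∨ m = 1 ∨ m = 2 ∨ m = 3 := by
  fin_cases m <;> simp

lemma fin7_cases (m : Fin 7) :
    m = 0 ∨ m = 1 ∨ m = 2 ∨ m = 3 ∨ m = 4 ∨ m = 5 ∨ m = 6 := by
  fin_cases m <;> simp

lemma cover (hI : RInv n T s) (hvc : ValidCycle s c) :
    ∀ p ∈ c, ∃ b, Qb b c p = true := by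
  rintro ⟨i, j⟩ hp
  have hd := hvc.2.2.2.1 _ hp
  have hrd := dem_RD hI hd
  dsimp only at hd hrd
  cases j with
  | xi x =>
    obtain rfl : i = RAg.xa1 x := rd_xi hrd
    exact ⟨.inl (0, x), decide_eq_true rfl⟩
  | zi z =>
    obtain rfl : i = RAg.za z := rd_zi hrd
    exact ⟨.inl (1, z), decide_eq_true rfl⟩
  | yi y => exact ⟨.inl (2, y), decide_eq_true rfl⟩
  | gi t m =>
    rcases fin4_cases m with rfl | rfl | rfl | rfl
    · obtain rfl : i = RAg.xa3 t.1 := rd_gi0 hrd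
      exact ⟨.inl (3, t.1), decide_eq_true rfl⟩
    · obtain rfl : i = RAg.ga t 0 := rd_gi1 hrd
      exact ⟨.inl (4, t.2.1), decide_eq_true ⟨t, rfl, rfl⟩⟩
    · obtain rfl : i = RAg.ya t.2.1 := rd_gi2 hrd
      exact ⟨.inl (5, t.2.1), decide_eq_true rfl⟩
    · have hsnd : RIt.gi t 3 ∈ c.map Prod.snd := List.mem_map_of_mem (f := Prod.snd) hp
      obtain ⟨g, hg⟩ := vc_giver_exists hsnd
      rcases St_gi3_giver hI hvc hg with rfl | rfl
      · exact ⟨.inl (6, t.2.2), decide_eq_true ⟨t, rfl, rfl, hg⟩⟩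
      · have hi2 : i = RAg.ga t 2 := by
          rcases rd_gi3 hrd with h0 | h2
          · exfalso
            rw [h0] at hd
            exact own_not_dem hI (hvc.2.2.2.2 _ hg) hd
          · exact h2
        subst hi2
        exact ⟨.inr t, decide_eq_true ⟨rfl, hg⟩⟩

lemma atmost (hI : RInv n T s) (hvc : ValidCycle s c) :
    ∀ b, c.countP (Qb b c) ≤ 1 := by
  intro b
  apply countP_le_one_of_eq (vc_nodup hvc)
  intro p hp q hq hP hQ
  cases b with
  | inl kv =>
    obtain ⟨k, v⟩ := kv
    rcases fin7_cases k with rfl | rfl | rfl | rfl | rfl | rfl | rfl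
    · have hP' : p = (RAg.xa1 v, RIt.xi v) := of_decide_eq_true hP
      have hQ' : q = (RAg.xa1 v, RIt.xi v) := of_decide_eq_true hQ
      rw [hP', hQ']
    · have hP' : p = (RAg.za v, RIt.zi v) := of_decide_eq_true hP
      have hQ' : q = (RAg.za v, RIt.zi v) := of_decide_eq_true hQ
      rw [hP', hQ']
    · have hP' : p.2 = RIt.yi v := of_decide_eq_true hP
      have hQ' : q.2 = RIt.yi v := of_decide_eq_true hQ
      exact vc_snd_inj hvc hp hq (hP'.trans hQ'.symm)
    · have hP' : p.1 = RAg.xa3 v := of_decide_eq_true hP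
      have hQ' : q.1 = RAg.xa3 v := of_decide_eq_true hQ
      exact vc_fst_inj hvc hp hq (hP'.trans hQ'.symm)
    · have hP' : ∃ t : Fin n × Fin n × Fin n, t.2.1 = v ∧
          p = (RAg.ga t 0, RIt.gi t 1) := of_decide_eq_true hP
      have hQ' : ∃ t : Fin n × Fin n × Fin n, t.2.1 = v ∧
          q = (RAg.ga t 0, RIt.gi t 1) := of_decide_eq_true hQ
      obtain ⟨t, htv, rfl⟩ := hP'
      obtain ⟨t', ht'v, rfl⟩ := hQ'
      have h1 := (St_gi1 hI hvc hp).2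
      have h2 := (St_gi1 hI hvc hq).2
      rw [htv] at h1
      rw [ht'v] at h2
      have := vc_snd_inj hvc h1 h2 rfl
      rw [Prod.ext_iff, RAg.ga.injEq] at this
      rw [this.1.1]
    · have hP' : p.1 = RAg.ya v := of_decide_eq_true hP
      have hQ' : q.1 = RAg.ya v := of_decide_eq_true hQ
      exact vc_fst_inj hvc hp hq (hP'.trans hQ'.symm)
    · have hP' : ∃ t : Fin n × Fin n × Fin n, t.2.2 = v ∧ p.2 = RIt.gi t 3 ∧
          (RAg.za v, RIt.gi t 3) ∈ gives c := of_decide_eq_true hP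
      have hQ' : ∃ t : Fin n × Fin n × Fin n, t.2.2 = v ∧ q.2 = RIt.gi t 3 ∧
          (RAg.za v, RIt.gi t 3) ∈ gives c := of_decide_eq_true hQ
      obtain ⟨t, htv, hp2, hgv⟩ := hP'
      obtain ⟨t', ht'v, hq2, hgv'⟩ := hQ'
      have h2 : RIt.gi t 3 = RIt.gi t' 3 :=
        congrArg Prod.snd (vc_gives_fst_inj hvc hgv hgv' rfl)
      apply vc_snd_inj hvc hp hq
      rw [hp2, hq2, h2]
  | inr t =>
    have hP' : p = (RAg.ga t 2, RIt.gi t 3) ∧ (RAg.ga t 0, RIt.gi t 3) ∈ gives c :=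
      of_decide_eq_true hP
    have hQ' : q = (RAg.ga t 2, RIt.gi t 3) ∧ (RAg.ga t 0, RIt.gi t 3) ∈ gives c :=
      of_decide_eq_true hQ
    rw [hP'.1, hQ'.1]

lemma toR (hI : RInv n T s) (hvc : ValidCycle s c) :
    ∀ b, 0 < c.countP (Qb b c) → Rb b c = true := by
  intro b hpos
  rw [List.countP_pos_iff] at hpos
  obtain ⟨p, hp, hP⟩ := hpos
  cases b with
  | inl kv =>
    obtain ⟨k, v⟩ := kv
    rcases fin7_cases k with rfl | rfl | rfl | rfl | rfl | rfl | rfl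
    · have hP' : p = (RAg.xa1 v, RIt.xi v) := of_decide_eq_true hP
      exact decide_eq_true (hP' ▸ hp)
    · have hP' : p = (RAg.za v, RIt.zi v) := of_decide_eq_true hP
      exact decide_eq_true (hP' ▸ hp)
    · have hP' : p.2 = RIt.yi v := of_decide_eq_true hP
      exact decide_eq_true (St_yirec hI hvc (hP' ▸ List.mem_map_of_mem (f := Prod.snd) hp))
    · have hP' : p.1 = RAg.xa3 v := of_decide_eq_true hP
      exact decide_eq_true (St_xa3 hI hvc (hP' ▸ List.mem_map_of_mem (f := Prod.fst) hp))
    · have hP' : ∃ t : Fin n × Fin n × Fin n, t.2.1 = v ∧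
          p = (RAg.ga t 0, RIt.gi t 1) := of_decide_eq_true hP
      obtain ⟨t, htv, rfl⟩ := hP'
      have h1 := (St_gi1 hI hvc hp).2
      rw [htv] at h1
      exact decide_eq_true (St_yirec hI hvc (List.mem_map_of_mem (f := Prod.snd) h1))
    · have hP' : p.1 = RAg.ya v := of_decide_eq_true hP
      exact decide_eq_true (St_ya hI hvc (hP' ▸ List.mem_map_of_mem (f := Prod.fst) hp))
    · have hP' : ∃ t : Fin n × Fin n × Fin n, t.2.2 = v ∧ p.2 = RIt.gi t 3 ∧
          (RAg.za v, RIt.gi t 3) ∈ gives c := of_decide_eq_true hP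
      obtain ⟨t, htv, hp2, hgv⟩ := hP'
      refine decide_eq_true (St_za hI hvc ?_)
      rw [← gives_map_fst]
      exact List.mem_map_of_mem (f := Prod.fst) hgv
  | inr t =>
    have hP' : p = (RAg.ga t 2, RIt.gi t 3) ∧ (RAg.ga t 0, RIt.gi t 3) ∈ gives c :=
      of_decide_eq_true hP
    exact decide_eq_true hP'.2

end Main
/-- If every 3D-matching of the source instance has size at most
`d`, then every execution on the reduction trading graph performs at most `7n + d`
exchanges. -/
theorem stmt15 (n d : ℕ) (T : Finset (Fin n × Fin n × Fin n))
    (hmatch : ∀ S ⊆ T, IsPartialMatching S → S.card ≤ d)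
    (r : List (List (RAg n × RIt n))) (hr : ValidExec ⟨RS n T, RD n T⟩ r) :
    exchanges r ≤ 7 * n + d := by
  have hI0 : RInv n T ⟨RS n T, RD n T⟩ := inv_init
  have hmem := exec_mem hI0 hr
  have h1 : ∀ c ∈ r, ∀ p ∈ c, ∃ b, Qb b c p = true := by
    intro c hc
    obtain ⟨s', hI, hvc⟩ := hmem c hc
    exact cover hI hvc
  have h2 : ∀ b, ∀ c ∈ r, c.countP (Qb b c) ≤ 1 := by
    intro b c hc
    obtain ⟨s', hI, hvc⟩ := hmem c hc
    exact atmost hI hvc b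
  have h3 : ∀ b, ∀ c ∈ r, 0 < c.countP (Qb b c) → Rb b c = true := by
    intro b c hc
    obtain ⟨s', hI, hvc⟩ := hmem c hc
    exact toR hI hvc b
  have key := patternA r Qb Rb h1 h2 h3
  rw [Fintype.sum_sum_type] at key
  have hleft : ∑ kv : Fin 7 × Fin n, r.countP (Rb (Sum.inl kv)) ≤ 7 * n := by
    calc ∑ kv : Fin 7 × Fin n, r.countP (Rb (Sum.inl kv))
        ≤ ∑ _kv : Fin 7 × Fin n, 1 := by
          apply Finset.sum_le_sum
          rintro ⟨k, v⟩ -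
          rcases fin7_cases k with rfl | rfl | rfl | rfl | rfl | rfl | rfl
          · exact recOnce hr (RAg.xa1 v, RIt.xi v)
          · exact recOnce hr (RAg.za v, RIt.zi v)
          · exact giveOnce hI0 hr (RAg.ya v, RIt.yi v)
          · exact giveOnce hI0 hr (RAg.xa3 v, RIt.xi v)
          · exact giveOnce hI0 hr (RAg.ya v, RIt.yi v)
          · exact giveOnce hI0 hr (RAg.ya v, RIt.yi v)
          · exact recOnce hr (RAg.za v, RIt.zi v)
      _ = 7 * n := by simp [Finset.card_univ]
  -- the triples with a W-event
  set Sw : Finset (Fin n × Fin n × Fin n) :=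
    Finset.univ.filter (fun t => 0 < r.countP (Rb (Sum.inr t))) with hSw
  have hT : ∀ t : Fin n × Fin n × Fin n, 0 < r.countP (Rb (Sum.inr t)) →
      ∃ c ∈ r, (RAg.ga t 0, RIt.gi t 3) ∈ gives c := by
    intro t ht
    rw [List.countP_pos_iff] at ht
    obtain ⟨c, hc, hP⟩ := ht
    exact ⟨c, hc, of_decide_eq_true hP⟩
  have h0 : ∀ u : Fin n × Fin n × Fin n,
      RIt.gi u 3 ∉ (⟨RS n T, RD n T⟩ : TState (RAg n) (RIt n)).own (RAg.ga u 0) := by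
    intro u hmem'
    have := rs_gi3 (T := T) hmem'
    simp at this
  have hsub : Sw ⊆ T := by
    intro t ht
    rw [hSw, Finset.mem_filter] at ht
    obtain ⟨c, hc, hW⟩ := hT t ht.2
    obtain ⟨s', hI, hvc⟩ := hmem c hc
    exact (St_W hI hvc hW).2.2.2
  have hpm : IsPartialMatching Sw := by
    intro t ht t' ht' hne
    rw [hSw, Finset.mem_filter] at ht ht'
    obtain ⟨c1, hc1, hW1⟩ := hT t ht.2
    obtain ⟨c2, hc2, hW2⟩ := hT t' ht'.2
    refine ⟨?_, ?_, ?_⟩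
    · -- distinct x coordinates
      intro heq
      obtain ⟨e1, he1, hE1⟩ := trace hI0 hr (RAg.ga t 0, RIt.gi t 3) (h0 t) ⟨c1, hc1, hW1⟩
      obtain ⟨e2, he2, hE2⟩ := trace hI0 hr (RAg.ga t' 0, RIt.gi t' 3) (h0 t') ⟨c2, hc2, hW2⟩
      have hene : e1 ≠ e2 := by
        rintro rfl
        obtain ⟨s', hI, hvc⟩ := hmem e1 he1
        have hx1 := (St_E6 hI hvc hE1).2.2.1
        have hx2 := (St_E6 hI hvc hE2).2.2.1
        rw [← heq] at hx2
        have h5 : RIt.gi t 0 = RIt.gi t' 0 :=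
          congrArg Prod.snd (vc_fst_inj hvc hx1 hx2 rfl)
        rw [RIt.gi.injEq] at h5
        exact hne h5.1
      have hchi : 2 ≤ r.countP (fun c => decide ((RAg.xa3 t.1, RIt.xi t.1) ∈ gives c)) := by
        apply two_distinct_countP _ he1 he2 hene
        · obtain ⟨s', hI, hvc⟩ := hmem e1 he1
          exact decide_eq_true (St_E6 hI hvc hE1).2.2.2
        · obtain ⟨s', hI, hvc⟩ := hmem e2 he2
          have := (St_E6 hI hvc hE2).2.2.2
          rw [← heq] at this
          exact decide_eq_true this
      have := giveOnce hI0 hr (RAg.xa3 t.1, RIt.xi t.1)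
      omega
    · -- distinct y coordinates
      intro heq
      have hene : c1 ≠ c2 := by
        rintro rfl
        obtain ⟨s', hI, hvc⟩ := hmem c1 hc1
        have hy1 := (St_W hI hvc hW1).2.1
        have hy2 := (St_W hI hvc hW2).2.1
        rw [← heq] at hy2
        have h5 : RIt.gi t 2 = RIt.gi t' 2 :=
          congrArg Prod.snd (vc_fst_inj hvc hy1 hy2 rfl)
        rw [RIt.gi.injEq] at h5
        exact hne h5.1
      have hchi : 2 ≤ r.countP
          (fun c => decide ((RAg.ya t.2.1, RIt.yi t.2.1) ∈ gives c)) := by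
        apply two_distinct_countP _ hc1 hc2 hene
        · obtain ⟨s', hI, hvc⟩ := hmem c1 hc1
          exact decide_eq_true (St_W hI hvc hW1).2.2.1
        · obtain ⟨s', hI, hvc⟩ := hmem c2 hc2
          have := (St_W hI hvc hW2).2.2.1
          rw [← heq] at this
          exact decide_eq_true this
      have := giveOnce hI0 hr (RAg.ya t.2.1, RIt.yi t.2.1)
      omega
    · -- distinct z coordinates
      intro heq
      obtain ⟨e1, he1, hE1⟩ := trace hI0 hr (RAg.ga t 0, RIt.gi t 3) (h0 t) ⟨c1, hc1, hW1⟩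
      obtain ⟨e2, he2, hE2⟩ := trace hI0 hr (RAg.ga t' 0, RIt.gi t' 3) (h0 t') ⟨c2, hc2, hW2⟩
      have hene : e1 ≠ e2 := by
        rintro rfl
        obtain ⟨s', hI, hvc⟩ := hmem e1 he1
        have hz1 := (St_E6 hI hvc hE1).1
        have hz2 := (St_E6 hI hvc hE2).1
        rw [← heq] at hz2
        have h5 : RIt.gi t 3 = RIt.gi t' 3 :=
          congrArg Prod.snd (vc_gives_fst_inj hvc hz1 hz2 rfl)
        rw [RIt.gi.injEq] at h5
        exact hne h5.1
      have hchi : 2 ≤ r.countP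
          (fun c => decide ((RAg.za t.2.2, RIt.zi t.2.2) ∈ c)) := by
        apply two_distinct_countP _ he1 he2 hene
        · obtain ⟨s', hI, hvc⟩ := hmem e1 he1
          exact decide_eq_true (St_E6 hI hvc hE1).2.1
        · obtain ⟨s', hI, hvc⟩ := hmem e2 he2
          have := (St_E6 hI hvc hE2).2.1
          rw [← heq] at this
          exact decide_eq_true this
      have := recOnce hr (RAg.za t.2.2, RIt.zi t.2.2)
      omega
  have hcard : Sw.card ≤ d := hmatch Sw hsub hpm
  have hright : ∑ t : Fin n × Fin n × Fin n, r.countP (Rb (Sum.inr t)) ≤ d := by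
    rw [← Finset.sum_filter_add_sum_filter_not Finset.univ
      (fun t => 0 < r.countP (Rb (Sum.inr t)))]
    have hz : ∑ t ∈ Finset.univ.filter
        (fun t => ¬ 0 < r.countP (Rb (Sum.inr t))), r.countP (Rb (Sum.inr t)) = 0 := by
      apply Finset.sum_eq_zero
      intro t ht
      rw [Finset.mem_filter] at ht
      omega
    rw [hz, add_zero]
    calc ∑ t ∈ Sw, r.countP (Rb (Sum.inr t))
        ≤ ∑ _t ∈ Sw, 1 :=
          Finset.sum_le_sum fun t _ => giveOnce hI0 hr (RAg.ga t 0, RIt.gi t 3)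
      _ = Sw.card := by simp
      _ ≤ d := hcard
  show (r.map List.length).sum ≤ 7 * n + d
  omega
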